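/- Let R be a relation on a finite set V, with unrolled graph on ℤ × V having edges from (t−1, i) to (t, j) exactly when R i j. For every u ≥ 2, every t ∈ ℤ, and all distinct i, j ∈ V: there exists a vertex (s, c) of the unrolled graph with t − u < s < t that has directed paths to both (t, i) and (t, j), if and only if there exist c ∈ V and k with 1 ≤ k < u such that R has a walk of length k from c to i and a walk of length k from c to j. (This is Equation (2): the bidirected edges of G^u arise from common causes within the marginalized time window, with paths of the same length on each arm.) -/
import Mathlib


/-- A walk of length `k` from `i` to `j` in the digraph `R` is a function
`p : Fin (k+1) → V` with `p 0 = i`, `p k = j`, and `R (p m) (p (m+1))` for all `m < k`. -/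
def IsWalk {V : Type*} (R : V → V → Prop) (k : ℕ) (i j : V) (p : Fin (k + 1) → V) : Prop :=
  p 0 = i ∧ p (Fin.last k) = j ∧ ∀ m : Fin k, R (p m.castSucc) (p m.succ)

/-- There exists a walk of length `k` from `i` to `j` in `R`. -/
def HasWalk {V : Type*} (R : V → V → Prop) (k : ℕ) (i j : V) : Prop :=
  ∃ p : Fin (k + 1) → V, IsWalk R k i j p

/-- The edge relation of the unrolled graph of `R` on `ℤ × V`: there is an edge from
`(t-1, i)` to `(t, j)` exactly when `R i j`. -/
def UnrolledEdge {V : Type*} (R : V → V → Prop) (a b : ℤ × V) : Prop :=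
  b.1 = a.1 + 1 ∧ R a.2 b.2

lemma unrolled_walk_fst {V : Type*} {R : V → V → Prop} {k : ℕ} {a b : ℤ × V}
    {p : Fin (k+1) → ℤ × V} (h : IsWalk (UnrolledEdge R) k a b p) :
    ∀ m : Fin (k+1), (p m).1 = a.1 + m.val := by
  obtain ⟨h0, hl, hs⟩ := h
  intro m
  induction m using Fin.induction with
  | zero => simp [h0]
  | succ m ih =>
    have := (hs m).1
    rw [this, ih]
    simp [Fin.coe_castSucc, Fin.val_succ]
    push_cast
    ring

lemma unrolled_walk_time {V : Type*} {R : V → V → Prop} {k : ℕ} {a b : ℤ × V}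
    (h : HasWalk (UnrolledEdge R) k a b) : b.1 = a.1 + k := by
  obtain ⟨p, hp⟩ := h
  have := unrolled_walk_fst hp (Fin.last k)
  rw [hp.2.1] at this
  simpa using this

lemma unrolled_walk_proj {V : Type*} {R : V → V → Prop} {k : ℕ} {a b : ℤ × V}
    (h : HasWalk (UnrolledEdge R) k a b) : HasWalk R k a.2 b.2 := by
  obtain ⟨p, h0, hl, hs⟩ := h
  exact ⟨fun m => (p m).2, by simp [h0], by simp [hl], fun m => (hs m).2⟩

lemma unrolled_walk_lift {V : Type*} {R : V → V → Prop} {k : ℕ} {c i : V}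
    (s : ℤ) (h : HasWalk R k c i) :
    HasWalk (UnrolledEdge R) k (s, c) (s + k, i) := by
  obtain ⟨q, h0, hl, hs⟩ := h
  refine ⟨fun m => (s + m.val, q m), by simp [h0], by simp [hl], fun m => ?_⟩
  refine ⟨?_, hs m⟩
  simp only [Fin.coe_castSucc, Fin.val_succ]
  push_cast
  ring

/-- Equation (2): for `u ≥ 2` and distinct `i, j`, there is a common-cause vertex
`(s, c)` of the unrolled graph, with `t - u < s < t`, having directed paths to both
`(t, i)` and `(t, j)`, iff there exist `c` and `k` with `1 ≤ k < u` such that `R` has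
walks of length `k` from `c` to `i` and from `c` to `j`. -/
theorem unrolled_common_cause_iff {V : Type*} [Fintype V] (R : V → V → Prop)
    (u : ℕ) (hu : 2 ≤ u) (t : ℤ) (i j : V) (hij : i ≠ j) :
    (∃ (s : ℤ) (c : V), t - (u : ℤ) < s ∧ s < t ∧
        (∃ k : ℕ, 1 ≤ k ∧ HasWalk (UnrolledEdge R) k (s, c) (t, i)) ∧
        (∃ k : ℕ, 1 ≤ k ∧ HasWalk (UnrolledEdge R) k (s, c) (t, j))) ↔
      (∃ (c : V) (k : ℕ), 1 ≤ k ∧ k < u ∧ HasWalk R k c i ∧ HasWalk R k c j) := by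
  constructor
  · rintro ⟨s, c, hs1, hs2, ⟨k1, hk1, hw1⟩, ⟨k2, hk2, hw2⟩⟩
    have ht1 : (t : ℤ) = s + k1 := unrolled_walk_time hw1
    have ht2 : (t : ℤ) = s + k2 := unrolled_walk_time hw2
    have hkk : k1 = k2 := by omega
    subst hkk
    refine ⟨c, k1, hk1, by omega, unrolled_walk_proj hw1, unrolled_walk_proj hw2⟩
  · rintro ⟨c, k, hk1, hku, hw1, hw2⟩
    refine ⟨t - k, c, by omega, by omega, ⟨k, hk1, ?_⟩, ⟨k, hk1, ?_⟩⟩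
    · have := unrolled_walk_lift (t - k) hw1
      simpa using this
    · have := unrolled_walk_lift (t - k) hw2
      simpa using this
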